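/- For λ < 0, ω > 0 and c_N > 0, the effective potential U_eff(r) = c_N/(2(1−|λ|r²)r²) + ω²r²/(2(1−|λ|r²)) on (0, r_c) with r_c = 1/√|λ| attains its unique minimum at r_min with r_min² = (−|λ|c_N + √(λ²c_N² + ω²c_N))/ω², with minimum value U_eff(r_min) = |λ|c_N + √(λ²c_N² + ω²c_N); moreover U_eff(r) → +∞ both as r → 0⁺ and as r → r_c⁻. -/

import Mathlib

open Filter Topology
set_option maxHeartbeats 800000

lemma num_id (A om c t t0 M : ℝ)
    (hcrel : c = om^2*t0^2 + 2*A*c*t0) (hM : M = om^2*t0 + 2*A*c) :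
    c + om^2*t^2 - 2*M*t*(1-A*t) = (om^2 + 2*A*M)*(t-t0)^2 := by
  linear_combination (1 + 2*A*t0 - 4*A*t) * hcrel + (-2*t + 2*A*t^2 - 2*A*(t-t0)^2) * hM

lemma key_id (A om c t t0 M : ℝ)
    (hcrel : c = om^2*t0^2 + 2*A*c*t0) (hM : M = om^2*t0 + 2*A*c)
    (ht : t ≠ 0) (h1 : (1 - A*t) ≠ 0) :
    c/(2*(1-A*t)*t) + om^2*t/(2*(1-A*t))
      = M + (om^2 + 2*A*M)*(t-t0)^2/(2*(1-A*t)*t) := by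
  have h := num_id A om c t t0 M hcrel hM
  have hd : (2*(1-A*t)*t) ≠ 0 := by
    intro h0
    rcases mul_eq_zero.1 h0 with h2 | h2
    · rcases mul_eq_zero.1 h2 with h3 | h3
      · norm_num at h3
      · exact h1 h3
    · exact ht h2
  have e1 : c/(2*(1-A*t)*t) + om^2*t/(2*(1-A*t)) = (c + om^2*t^2)/(2*(1-A*t)*t) := by
    field_simp
  have e2 : c + om^2*t^2 = M*(2*(1-A*t)*t) + (om^2+2*A*M)*(t-t0)^2 := by
    linear_combination h
  rw [e1, e2, add_div, mul_div_cancel_right₀ M hd]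

theorem stmt_17 (lam om c : ℝ) (hlam : lam < 0) (hom : 0 < om) (hc : 0 < c)
    (rc : ℝ) (hrc : rc = 1 / Real.sqrt |lam|)
    (Ueff : ℝ → ℝ)
    (hUeff : ∀ r, Ueff r = c / (2 * (1 - |lam| * r ^ 2) * r ^ 2)
        + om ^ 2 * r ^ 2 / (2 * (1 - |lam| * r ^ 2)))
    (rmin : ℝ)
    (hrmin : rmin = Real.sqrt ((-|lam| * c + Real.sqrt (lam ^ 2 * c ^ 2 + om ^ 2 * c)) / om ^ 2)) :
    rmin ∈ Set.Ioo (0 : ℝ) rc ∧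
    Ueff rmin = |lam| * c + Real.sqrt (lam ^ 2 * c ^ 2 + om ^ 2 * c) ∧
    (∀ r ∈ Set.Ioo (0 : ℝ) rc, Ueff rmin ≤ Ueff r) ∧
    (∀ r ∈ Set.Ioo (0 : ℝ) rc, Ueff r = Ueff rmin → r = rmin) ∧
    Tendsto Ueff (𝓝[>] (0 : ℝ)) atTop ∧
    Tendsto Ueff (𝓝[<] rc) atTop := by
  have hA : (0:ℝ) < |lam| := abs_pos.mpr hlam.ne
  have hA2 : |lam| ^ 2 = lam ^ 2 := sq_abs lam
  have hD : (0:ℝ) < lam ^ 2 * c ^ 2 + om ^ 2 * c := by positivity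
  set s := Real.sqrt (lam ^ 2 * c ^ 2 + om ^ 2 * c) with hs_def
  have hs2 : s ^ 2 = lam ^ 2 * c ^ 2 + om ^ 2 * c := Real.sq_sqrt hD.le
  have hspos : 0 < s := Real.sqrt_pos.2 hD
  have hsgt : |lam| * c < s := by
    rw [hs_def, show ((|lam| * c < Real.sqrt (lam ^ 2 * c ^ 2 + om ^ 2 * c)) ↔
      (|lam| * c) ^ 2 < lam ^ 2 * c ^ 2 + om ^ 2 * c) from Real.lt_sqrt (by positivity),
      mul_pow, hA2]
    linarith [mul_pos (pow_pos hom 2) hc]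
  clear_value s
  set t0 := (-|lam| * c + s) / om ^ 2 with ht0_def
  have ht0pos : 0 < t0 := div_pos (by linarith) (by positivity)
  have hs_eq : s = om ^ 2 * t0 + |lam| * c := by
    rw [ht0_def]; field_simp; ring
  clear_value t0
  have hcrel : c = om ^ 2 * t0 ^ 2 + 2 * |lam| * c * t0 := by
    have h := hs2
    rw [hs_eq] at h
    have hom2 : (om ^ 2 : ℝ) ≠ 0 := by positivity
    apply mul_left_cancel₀ hom2
    linear_combination -h + c ^ 2 * hA2
  set M := |lam| * c + s with hM_def
  have hM : M = om ^ 2 * t0 + 2 * |lam| * c := by rw [hM_def, hs_eq]; ring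
  clear_value M
  have hMpos : 0 < M := by
    have := mul_pos hA hc; rw [hM_def]; linarith
  have hKpos : 0 < om ^ 2 + 2 * |lam| * M := by
    have := mul_pos hA hMpos
    have := pow_pos hom 2
    linarith
  -- rmin facts
  have hrmin' : rmin = Real.sqrt t0 := hrmin
  have hrmpos : 0 < rmin := by rw [hrmin']; exact Real.sqrt_pos.2 ht0pos
  have hrm2 : rmin ^ 2 = t0 := by rw [hrmin']; exact Real.sq_sqrt ht0pos.le
  -- rc facts
  have hrcpos : 0 < rc := by rw [hrc]; positivity
  have hrc2 : rc ^ 2 = 1 / |lam| := by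
    rw [hrc, div_pow, one_pow, Real.sq_sqrt hA.le]
  -- rmin < rc
  have hlc : 0 < lam ^ 2 * c := by
    have hl0 : lam ≠ 0 := hlam.ne
    positivity
  have hslt : |lam| * s < om ^ 2 + |lam| ^ 2 * c := by
    have h1 : (|lam| * s) ^ 2 < (om ^ 2 + |lam| ^ 2 * c) ^ 2 := by
      rw [mul_pow, hs2, hA2]
      have e : (om ^ 2 + lam ^ 2 * c) ^ 2 - lam ^ 2 * (lam ^ 2 * c ^ 2 + om ^ 2 * c)
          = om ^ 2 * om ^ 2 + om ^ 2 * (lam ^ 2 * c) := by ring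
      linarith [mul_pos (pow_pos hom 2) (pow_pos hom 2), mul_pos (pow_pos hom 2) hlc, e]
    exact lt_of_pow_lt_pow_left₀ 2 (by positivity) h1
  have ht0lt : t0 < 1 / |lam| := by
    rw [ht0_def, div_lt_div_iff₀ (by positivity) hA]
    have e : (-|lam| * c + s) * |lam| = |lam| * s - |lam| ^ 2 * c := by ring
    linarith [hslt, e]
  have hrmlt : rmin < rc := by
    have h1 : rmin ^ 2 < rc ^ 2 := by rw [hrm2, hrc2]; exact ht0lt
    exact lt_of_pow_lt_pow_left₀ 2 hrcpos.le h1
  -- positivity of 1 - |lam| r^2 on (0, rc)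
  have hpos1 : ∀ r : ℝ, 0 < r → r < rc → 0 < 1 - |lam| * r ^ 2 := by
    intro r hr hrlt
    have h1 : r ^ 2 < rc ^ 2 := pow_lt_pow_left₀ hrlt hr.le two_ne_zero
    rw [hrc2] at h1
    have h2 : r ^ 2 * |lam| < 1 := (lt_div_iff₀ hA).1 h1
    have h3 : |lam| * r ^ 2 < 1 := by rwa [mul_comm] at h2
    linarith
  -- key identity
  have hkey : ∀ r : ℝ, 0 < r → r < rc →
      Ueff r = M + (om ^ 2 + 2 * |lam| * M) * (r ^ 2 - t0) ^ 2
        / (2 * (1 - |lam| * r ^ 2) * r ^ 2) := by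
    intro r hr hrlt
    rw [hUeff r]
    exact key_id |lam| om c (r ^ 2) t0 M hcrel hM (by positivity)
      (ne_of_gt (hpos1 r hr hrlt))
  have hUmin : Ueff rmin = M := by
    rw [hkey rmin hrmpos hrmlt, hrm2]
    simp
  refine ⟨⟨hrmpos, hrmlt⟩, hUmin, ?_, ?_, ?_, ?_⟩
  · -- minimality
    intro r hr
    rw [hUmin, hkey r hr.1 hr.2]
    have hd : 0 < 2 * (1 - |lam| * r ^ 2) * r ^ 2 :=
      mul_pos (mul_pos two_pos (hpos1 r hr.1 hr.2)) (pow_pos hr.1 2)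
    have h0 : 0 ≤ (om ^ 2 + 2 * |lam| * M) * (r ^ 2 - t0) ^ 2
        / (2 * (1 - |lam| * r ^ 2) * r ^ 2) :=
      div_nonneg (mul_nonneg hKpos.le (sq_nonneg _)) hd.le
    linarith
  · -- uniqueness
    intro r hr heq
    rw [hUmin, hkey r hr.1 hr.2] at heq
    have hd : 0 < 2 * (1 - |lam| * r ^ 2) * r ^ 2 :=
      mul_pos (mul_pos two_pos (hpos1 r hr.1 hr.2)) (pow_pos hr.1 2)
    have hq : (om ^ 2 + 2 * |lam| * M) * (r ^ 2 - t0) ^ 2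
        / (2 * (1 - |lam| * r ^ 2) * r ^ 2) = 0 := by linarith
    have h0 : (om ^ 2 + 2 * |lam| * M) * (r ^ 2 - t0) ^ 2 = 0 := by
      rcases div_eq_zero_iff.1 hq with h | h
      · exact h
      · exact absurd h hd.ne'
    have h1 : (r ^ 2 - t0) ^ 2 = 0 := by
      rcases mul_eq_zero.1 h0 with h | h
      · exact absurd h hKpos.ne'
      · exact h
    have h2 : r ^ 2 = t0 := by
      have := sq_eq_zero_iff.1 h1
      linarith
    rw [← Real.sqrt_sq hr.1.le, h2, ← hrmin']
  · -- tendsto at 0+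
    apply tendsto_atTop_mono' _ _ (show Tendsto (fun r : ℝ => c / 2 * (r ^ 2)⁻¹)
        (𝓝[>] (0:ℝ)) atTop from ?_)
    · have hev : ∀ᶠ r in 𝓝[>] (0:ℝ), r ∈ Set.Ioo (0:ℝ) rc := by
        filter_upwards [self_mem_nhdsWithin,
          eventually_nhdsWithin_of_eventually_nhds (eventually_lt_nhds hrcpos)] with r h1 h2
        exact ⟨h1, h2⟩
      filter_upwards [hev] with r hr
      have h1 := hpos1 r hr.1 hr.2
      rw [hUeff r]
      have hd3 : 0 < 2 * (1 - |lam| * r ^ 2) * r ^ 2 :=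
        mul_pos (mul_pos two_pos h1) (pow_pos hr.1 2)
      have hb1 : c / 2 * (r ^ 2)⁻¹ ≤ c / (2 * (1 - |lam| * r ^ 2) * r ^ 2) := by
        rw [show c / 2 * (r ^ 2)⁻¹ = c / (2 * r ^ 2) from by ring,
          div_le_div_iff₀ (mul_pos two_pos (pow_pos hr.1 2)) hd3]
        have hterm : 0 ≤ c * |lam| * r ^ 2 * r ^ 2 := by positivity
        have e : c * (2 * (1 - |lam| * r ^ 2) * r ^ 2) + 2 * (c * |lam| * r ^ 2 * r ^ 2)
            = c * (2 * r ^ 2) := by ring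
        linarith [hterm, e]
      have hb2 : 0 ≤ om ^ 2 * r ^ 2 / (2 * (1 - |lam| * r ^ 2)) := by
        have h2 : 0 < 2 * (1 - |lam| * r ^ 2) := by linarith
        positivity
      linarith
    · have h2 : Tendsto (fun r : ℝ => r ^ 2) (𝓝[>] (0:ℝ)) (𝓝[>] (0:ℝ)) := by
        rw [tendsto_nhdsWithin_iff]
        constructor
        · have h0 : Tendsto (fun r : ℝ => r ^ 2) (𝓝 (0:ℝ)) (𝓝 ((0:ℝ) ^ 2)) :=
            (continuous_pow 2).tendsto 0
          simpa using h0.mono_left nhdsWithin_le_nhds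
        · filter_upwards [self_mem_nhdsWithin] with r hr
          exact pow_pos (show (0:ℝ) < r from hr) 2
      exact Tendsto.const_mul_atTop (by positivity : (0:ℝ) < c / 2) h2.inv_tendsto_nhdsGT_zero
  · -- tendsto at rc-
    have hev : ∀ᶠ r in 𝓝[<] rc, rc / 2 < r ∧ r < rc := by
      filter_upwards [self_mem_nhdsWithin,
        eventually_nhdsWithin_of_eventually_nhds (eventually_gt_nhds (half_lt_self hrcpos))]
        with r h1 h2
      exact ⟨h2, h1⟩
    have hg : Tendsto (fun r : ℝ => 1 - |lam| * r ^ 2) (𝓝[<] rc) (𝓝[>] (0:ℝ)) := by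
      rw [tendsto_nhdsWithin_iff]
      constructor
      · have h0 : Tendsto (fun r : ℝ => 1 - |lam| * r ^ 2) (𝓝 rc)
            (𝓝 (1 - |lam| * rc ^ 2)) :=
          (continuous_const.sub (continuous_const.mul (continuous_pow 2))).tendsto rc
        have he : 1 - |lam| * rc ^ 2 = 0 := by
          rw [hrc2]; field_simp; norm_num
        rw [he] at h0
        exact h0.mono_left nhdsWithin_le_nhds
      · filter_upwards [hev] with r hr
        exact hpos1 r (lt_trans (half_pos hrcpos) hr.1) hr.2
    apply tendsto_atTop_mono' _ _
      (Tendsto.const_mul_atTop (by positivity : (0:ℝ) < om ^ 2 * (rc / 2) ^ 2 / 2)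
        hg.inv_tendsto_nhdsGT_zero)
    filter_upwards [hev] with r hr
    simp only [Pi.inv_apply]
    have hrpos : 0 < r := lt_trans (half_pos hrcpos) hr.1
    have h1 := hpos1 r hrpos hr.2
    rw [hUeff r]
    have hd3 : 0 < 2 * (1 - |lam| * r ^ 2) * r ^ 2 :=
      mul_pos (mul_pos two_pos h1) (pow_pos hrpos 2)
    have hb1 : 0 ≤ c / (2 * (1 - |lam| * r ^ 2) * r ^ 2) := div_nonneg hc.le hd3.le
    have hd2 : 0 < 2 * (1 - |lam| * r ^ 2) := by linarith
    have hb2 : om ^ 2 * (rc / 2) ^ 2 / 2 * (1 - |lam| * r ^ 2)⁻¹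
        ≤ om ^ 2 * r ^ 2 / (2 * (1 - |lam| * r ^ 2)) := by
      have he : om ^ 2 * (rc / 2) ^ 2 / 2 * (1 - |lam| * r ^ 2)⁻¹
          = om ^ 2 * (rc / 2) ^ 2 / (2 * (1 - |lam| * r ^ 2)) := by
        field_simp
      rw [he]
      apply (div_le_div_iff_of_pos_right hd2).2
      have h5 : (rc / 2) ^ 2 ≤ r ^ 2 := pow_le_pow_left₀ (half_pos hrcpos).le hr.1.le 2
      have e : om ^ 2 * r ^ 2 - om ^ 2 * (rc / 2) ^ 2 = om ^ 2 * (r ^ 2 - (rc / 2) ^ 2) := by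
        ring
      linarith [mul_nonneg (pow_pos hom 2).le (sub_nonneg.2 h5), e]
    linarith
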